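/- Let ξ_1, …, ξ_n be independent real random variables and w ∈ ℝ. If P(max_i ξ_i > w) < 1, then Σ_{i=1}^n P(ξ_i > w) ≤ P(max_i ξ_i > w) / (1 − P(max_i ξ_i > w)). -/

import Mathlib

open MeasureTheory ProbabilityTheory

theorem stmt_10 {Ω : Type*} [MeasurableSpace Ω] (μ : Measure Ω) [IsProbabilityMeasure μ]
    (n : ℕ) (ξ : Fin n → Ω → ℝ) (hmeas : ∀ i, Measurable (ξ i))
    (hind : iIndepFun ξ μ)
    (w : ℝ) (h1 : (μ {ω | ∃ i, w < ξ i ω}).toReal < 1) :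
    ∑ i, (μ {ω | w < ξ i ω}).toReal ≤
      (μ {ω | ∃ i, w < ξ i ω}).toReal / (1 - (μ {ω | ∃ i, w < ξ i ω}).toReal) := by
  classical
  set E : Fin n → Set Ω := fun i => ξ i ⁻¹' Set.Ioi w with hE
  set F : Fin n → Set Ω := fun i => ξ i ⁻¹' Set.Iic w with hF
  have hEmeas : ∀ i, MeasurableSet (E i) := fun i => (hmeas i) measurableSet_Ioi
  have hFmeas : ∀ i, MeasurableSet (F i) := fun i => (hmeas i) measurableSet_Iic
  have hU : {ω : Ω | ∃ i, w < ξ i ω} = ⋃ i, E i := by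
    ext ω; simp [hE]
  have hEi : ∀ i, {ω : Ω | w < ξ i ω} = E i := fun i => rfl
  -- B i : ξ i > w and all others ≤ w
  set s : Fin n → Fin n → Set Ω := fun i j => if j = i then E j else F j with hs
  set B : Fin n → Set Ω := fun i => ⋂ j, s i j with hB
  have hscomap : ∀ i j, MeasurableSet[(inferInstance : MeasurableSpace ℝ).comap (ξ j)] (s i j) := by
    intro i j
    simp only [hs]
    split_ifs
    · exact ⟨Set.Ioi w, measurableSet_Ioi, rfl⟩
    · exact ⟨Set.Iic w, measurableSet_Iic, rfl⟩
  have hBmeas : ∀ i, MeasurableSet (B i) := by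
    intro i; apply MeasurableSet.iInter; intro j
    simp only [hs]
    split_ifs
    · exact hEmeas j
    · exact hFmeas j
  have hBE : ∀ i, μ (B i) = μ (E i) * ∏ j ∈ Finset.univ.erase i, μ (F j) := by
    intro i
    have := hind.meas_iInter (s := s i) (hscomap i)
    rw [hB, this]
    rw [← Finset.prod_erase_mul _ _ (Finset.mem_univ i)]
    simp only [hs, if_pos rfl]
    rw [mul_comm]
    congr 1
    apply Finset.prod_congr rfl
    intro j hj
    rw [if_neg (Finset.ne_of_mem_erase hj)]
  -- complement
  have hcap : μ (⋂ j, F j) = ∏ j, μ (F j) := by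
    apply hind.meas_iInter
    intro j; exact ⟨Set.Iic w, measurableSet_Iic, rfl⟩
  have hcompl : (⋂ j, F j) = (⋃ i, E i)ᶜ := by
    ext ω
    simp [hE, hF, not_lt]
  set Q := μ (⋃ i, E i) with hQ
  have hQ1 : Q ≤ 1 := prob_le_one
  have hcomplQ : ∏ j, μ (F j) = 1 - Q := by
    rw [← hcap, hcompl, measure_compl (MeasurableSet.iUnion hEmeas) (measure_ne_top μ _),
      measure_univ]
  -- lower bound on μ (B i)
  have hlow : ∀ i, μ (E i) * (1 - Q) ≤ μ (B i) := by
    intro i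
    rw [hBE i, ← hcomplQ]
    apply mul_le_mul_right
    rw [← Finset.prod_erase_mul _ _ (Finset.mem_univ i)]
    exact mul_le_of_le_one_right (zero_le) prob_le_one
  -- disjointness
  have hdisj : Pairwise (Function.onFun Disjoint B) := by
    intro i k hik
    apply Set.disjoint_left.mpr
    intro ω hωi hωk
    have h1' : ω ∈ s i k := Set.mem_iInter.mp hωi k
    have h2' : ω ∈ s k k := Set.mem_iInter.mp hωk k
    simp only [hs, if_neg (Ne.symm hik), if_pos rfl, hE, hF, Set.mem_preimage,
      Set.mem_Iic, Set.mem_Ioi] at h1' h2'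
    exact absurd h2' (not_lt.mpr h1')
  have hsum : ∑ i, μ (B i) ≤ Q := by
    rw [← tsum_fintype (L := SummationFilter.unconditional _), ← measure_iUnion hdisj hBmeas]
    · apply measure_mono
      apply Set.iUnion_mono
      intro i
      intro ω hω
      have := Set.mem_iInter.mp hω i
      simpa [hs] using this
  have key : (∑ i, μ (E i)) * (1 - Q) ≤ Q := by
    calc (∑ i, μ (E i)) * (1 - Q) = ∑ i, μ (E i) * (1 - Q) := Finset.sum_mul ..
    _ ≤ ∑ i, μ (B i) := Finset.sum_le_sum fun i _ => hlow i
    _ ≤ Q := hsum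
  -- pass to reals
  rw [hU] at h1 ⊢
  simp only [hEi]
  set Q' := Q.toReal with hQ'
  have hQne : Q ≠ ⊤ := measure_ne_top μ _
  have hQ'1 : Q' < 1 := h1
  have h1Q : (0:ℝ) < 1 - Q' := by linarith
  have keyR : (∑ i, (μ (E i)).toReal) * (1 - Q') ≤ Q' := by
    have := ENNReal.toReal_mono hQne key
    rw [ENNReal.toReal_mul, ENNReal.toReal_sub_of_le hQ1 (by simp), ENNReal.toReal_one] at this
    rwa [ENNReal.toReal_sum (fun i _ => measure_ne_top μ _)] at this
  rw [le_div_iff₀ (by linarith)]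
  exact keyR
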